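/- Let A_1, A_2 ∈ ℝ^{n×n}, B_1, B_2 ∈ ℝ^{n×p}. Let Ω_ℝ ⊆ ℝ×ℝ be dense in ℝ×ℝ, and let P ∈ ℝ[X,Y]^{n×r} be such that for every (λ,μ) ∈ Ω_ℝ the ℝ-linear span of the columns of P(λ,μ) equals V^ℝ_{A_1,B_1}(λ) ∩ V^ℝ_{A_2,B_2}(μ). Write P(λ,μ) = Σ_{k=0}^{N} Σ_{l=0}^{N} C_{kl} λ^k μ^l with coefficient matrices C_{kl} ∈ ℝ^{n×r}. Then the pairs (A_1,B_1) and (A_2,B_2) are feedback rectifiable over Ω_ℝ if and only if the only α ∈ ℝ^n satisfying αᵀC_{kl} = 0 for all k, l ∈ {0,…,N} is α = 0. -/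

import Mathlib

open Matrix

noncomputable section

/-- Entrywise coercion of a real matrix to a complex matrix. -/
def mapC {n m : ℕ} (A : Matrix (Fin n) (Fin m) ℝ) : Matrix (Fin n) (Fin m) ℂ :=
  A.map (fun x => (x : ℂ))

/-- `V^ℝ_{A,B}(λ) = {v ∈ ℝ^n : (λI − A)v ∈ range B}`. -/
def VspR {n p : ℕ} (A : Matrix (Fin n) (Fin n) ℝ) (B : Matrix (Fin n) (Fin p) ℝ) (l : ℝ) :
    Submodule ℝ (Fin n → ℝ) :=
  Submodule.comap (l • (1 : Matrix (Fin n) (Fin n) ℝ) - A).mulVecLin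
    (LinearMap.range B.mulVecLin)

/-- The pairs `(A₁,B₁)` and `(A₂,B₂)` are feedback rectifiable over `D ⊆ ℂ × ℂ`. -/
def FeedbackRectifiable {n p : ℕ} (A₁ A₂ : Matrix (Fin n) (Fin n) ℝ)
    (B₁ B₂ : Matrix (Fin n) (Fin p) ℝ) (D : Set (ℂ × ℂ)) : Prop :=
  ∃ (F₁ F₂ : Matrix (Fin p) (Fin n) ℝ) (lm : Fin n → ℂ × ℂ) (v : Fin n → Fin n → ℂ),
    (∀ i, lm i ∈ D) ∧ LinearIndependent ℂ v ∧
    (∀ i, (mapC (A₁ + B₁ * F₁)).mulVec (v i) = (lm i).1 • v i) ∧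
    (∀ i, (mapC (A₂ + B₂ * F₂)).mulVec (v i) = (lm i).2 • v i)

/-- Entrywise evaluation of a matrix of real polynomials in two variables at a point of `ℝ²`. -/
def evalPR {n r : ℕ} (P : Matrix (Fin n) (Fin r) (MvPolynomial (Fin 2) ℝ)) (lam mu : ℝ) :
    Matrix (Fin n) (Fin r) ℝ :=
  P.map (MvPolynomial.aeval ![lam, mu])

lemma poly1_zero {N : ℕ} (b : ℕ → ℝ)
    (h : ∀ x : ℝ, ∑ k ∈ Finset.range (N + 1), b k * x ^ k = 0) :
    ∀ k ≤ N, b k = 0 := by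
  have hp : (∑ k ∈ Finset.range (N + 1), Polynomial.C (b k) * Polynomial.X ^ k)
      = (0 : Polynomial ℝ) := by
    apply Polynomial.funext
    intro x
    simp only [Polynomial.eval_finset_sum, Polynomial.eval_mul, Polynomial.eval_C,
      Polynomial.eval_pow, Polynomial.eval_X, Polynomial.eval_zero]
    exact h x
  intro k hk
  have h2 := congrArg (fun q => Polynomial.coeff q k) hp
  simp only [Polynomial.finset_sum_coeff, Polynomial.coeff_C_mul, Polynomial.coeff_X_pow,
    Polynomial.coeff_zero, mul_ite, mul_one, mul_zero] at h2
  rwa [Finset.sum_ite_eq (Finset.range (N + 1)) k b, if_pos (Finset.mem_range.mpr (Nat.lt_succ_of_le hk))] at h2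

lemma poly2_zero {N : ℕ} (a : ℕ → ℕ → ℝ)
    (h : ∀ x y : ℝ, ∑ k ∈ Finset.range (N + 1), ∑ l ∈ Finset.range (N + 1),
      (x ^ k * y ^ l) * a k l = 0) :
    ∀ k l, k ≤ N → l ≤ N → a k l = 0 := by
  intro k l hk hl
  have h1 : ∀ x : ℝ, ∀ l' ≤ N, (∑ k' ∈ Finset.range (N + 1), x ^ k' * a k' l') = 0 := by
    intro x
    apply poly1_zero (fun l' => ∑ k' ∈ Finset.range (N + 1), x ^ k' * a k' l')
    intro y
    rw [← h x y, Finset.sum_comm]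
    refine Finset.sum_congr rfl fun l' _ => ?_
    rw [Finset.sum_mul]
    refine Finset.sum_congr rfl fun k' _ => ?_
    ring
  have h2 : ∀ x : ℝ, ∑ k' ∈ Finset.range (N + 1), a k' l * x ^ k' = 0 := by
    intro x
    rw [← h1 x l hl]
    exact Finset.sum_congr rfl fun k' _ => by ring
  exact poly1_zero (fun k' => a k' l) h2 k hk

lemma vecMul_smulM {n r : ℕ} (α : Fin n → ℝ) (c : ℝ) (M : Matrix (Fin n) (Fin r) ℝ) :
    Matrix.vecMul α (c • M) = c • Matrix.vecMul α M := by
  funext j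
  simp [Matrix.vecMul, dotProduct, Finset.mul_sum, mul_left_comm]

lemma vecMul_finsetSum {n r : ℕ} {ι : Type*} (α : Fin n → ℝ) (s : Finset ι)
    (f : ι → Matrix (Fin n) (Fin r) ℝ) :
    Matrix.vecMul α (∑ i ∈ s, f i) = ∑ i ∈ s, Matrix.vecMul α (f i) := by
  induction s using Finset.cons_induction with
  | empty => simp
  | cons i s hi ih => rw [Finset.sum_cons, Finset.sum_cons, Matrix.vecMul_add, ih]

lemma mapC_mulVec {n m : ℕ} (M : Matrix (Fin n) (Fin m) ℝ) (x : Fin m → ℝ) :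
    (mapC M).mulVec (fun a => (x a : ℂ)) = fun a => ((M.mulVec x a : ℝ) : ℂ) := by
  funext a
  simp only [mapC, Matrix.mulVec, dotProduct, Matrix.map_apply]
  push_cast
  rfl

lemma re_im_mem_VspR {n p : ℕ} (A : Matrix (Fin n) (Fin n) ℝ) (B : Matrix (Fin n) (Fin p) ℝ)
    (F : Matrix (Fin p) (Fin n) ℝ) (c : ℝ) (w : Fin n → ℂ)
    (hw : (mapC (A + B * F)).mulVec w = (c : ℂ) • w) :
    (fun a => (w a).re) ∈ VspR A B c ∧ (fun a => (w a).im) ∈ VspR A B c := by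
  have key : ∀ (g : ℂ → ℝ), (∀ z₁ z₂ : ℂ, g (z₁ + z₂) = g z₁ + g z₂) → g 0 = 0 →
      (∀ (t : ℝ) (z : ℂ), g ((t : ℂ) * z) = t * g z) →
      (fun a => g (w a)) ∈ VspR A B c := by
    intro g hadd hzero hmul
    set x : Fin n → ℝ := fun a => g (w a) with hx
    have hre : (A + B * F).mulVec x = c • x := by
      funext a
      have hwa := congrFun hw a
      simp only [Matrix.mulVec, dotProduct, mapC, Matrix.map_apply,
        Pi.smul_apply, smul_eq_mul] at hwa ⊢
      have : g (∑ b, ((A + B * F) a b : ℂ) * w b) = g ((c : ℂ) * w a) := by rw [hwa]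
      rw [hmul] at this
      rw [← this]
      have hsum := map_sum (AddMonoidHom.mk' g hadd) (fun b => ((A + B * F) a b : ℂ) * w b)
        Finset.univ
      simp only [AddMonoidHom.mk'_apply] at hsum
      rw [hsum]
      exact Finset.sum_congr rfl fun b _ => (hmul _ _).symm
    have heq : (c • (1 : Matrix (Fin n) (Fin n) ℝ) - A).mulVec x = B.mulVec (F.mulVec x) := by
      have h' : A.mulVec x + (B * F).mulVec x = c • x := by
        rw [← Matrix.add_mulVec, hre]
      rw [Matrix.sub_mulVec, Matrix.smul_mulVec, Matrix.one_mulVec, ← h',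
        ← Matrix.mulVec_mulVec]
      abel
    exact ⟨F.mulVec x, by rw [Matrix.mulVecLin_apply, Matrix.mulVecLin_apply, heq]⟩
  constructor
  · exact key Complex.re (fun z₁ z₂ => Complex.add_re z₁ z₂) Complex.zero_re
      (fun t z => by simp [Complex.mul_re])
  · exact key Complex.im (fun z₁ z₂ => Complex.add_im z₁ z₂) Complex.zero_im
      (fun t z => by simp [Complex.mul_im])

theorem fwd
    {n p r N : ℕ} (A₁ A₂ : Matrix (Fin n) (Fin n) ℝ) (B₁ B₂ : Matrix (Fin n) (Fin p) ℝ)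
    (Ω : Set (ℝ × ℝ)) (hΩ : Dense Ω)
    (P : Matrix (Fin n) (Fin r) (MvPolynomial (Fin 2) ℝ))
    (hP : ∀ d ∈ Ω, LinearMap.range (evalPR P d.1 d.2).mulVecLin =
      VspR A₁ B₁ d.1 ⊓ VspR A₂ B₂ d.2)
    (C : ℕ → ℕ → Matrix (Fin n) (Fin r) ℝ)
    (hC : ∀ lam mu : ℝ, evalPR P lam mu =
      ∑ k ∈ Finset.range (N + 1), ∑ l ∈ Finset.range (N + 1), (lam ^ k * mu ^ l) • C k l)
    (h : FeedbackRectifiable A₁ A₂ B₁ B₂ ((fun x : ℝ × ℝ => ((x.1 : ℂ), (x.2 : ℂ))) '' Ω)) :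
    (∀ α : Fin n → ℝ, (∀ k l, k ≤ N → l ≤ N → Matrix.vecMul α (C k l) = 0) → α = 0) := by
  obtain ⟨F₁, F₂, lm, v, hlm, hli, h1, h2⟩ := h
  intro α hkl
  -- α annihilates evalPR everywhere
  have hev : ∀ lam mu, Matrix.vecMul α (evalPR P lam mu) = 0 := by
    intro lam mu
    rw [hC lam mu, vecMul_finsetSum]
    refine Finset.sum_eq_zero fun k hk => ?_
    rw [vecMul_finsetSum]
    refine Finset.sum_eq_zero fun l hl => ?_
    rw [vecMul_smulM,
      hkl k l (Nat.lt_succ_iff.mp (Finset.mem_range.mp hk))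
        (Nat.lt_succ_iff.mp (Finset.mem_range.mp hl)), smul_zero]
  -- α is dot-orthogonal to V₁ ⊓ V₂ on Ω
  have hdot : ∀ d ∈ Ω, ∀ x, x ∈ VspR A₁ B₁ d.1 ⊓ VspR A₂ B₂ d.2 → dotProduct α x = 0 := by
    intro d hd x hx
    rw [← hP d hd] at hx
    obtain ⟨z, hz⟩ := hx
    rw [← hz, Matrix.mulVecLin_apply, Matrix.dotProduct_mulVec, hev, zero_dotProduct]
  -- α (complexified) is dot-orthogonal to each v i
  have key : ∀ i, dotProduct (fun a => (α a : ℂ)) (v i) = 0 := by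
    intro i
    obtain ⟨d, hd, hde⟩ := hlm i
    have he1 : (lm i).1 = ((d.1 : ℝ) : ℂ) := by rw [← hde]
    have he2 : (lm i).2 = ((d.2 : ℝ) : ℂ) := by rw [← hde]
    have hv1 := h1 i; rw [he1] at hv1
    have hv2 := h2 i; rw [he2] at hv2
    have m1 := re_im_mem_VspR A₁ B₁ F₁ d.1 (v i) hv1
    have m2 := re_im_mem_VspR A₂ B₂ F₂ d.2 (v i) hv2
    have hre : dotProduct α (fun a => (v i a).re) = 0 :=
      hdot d hd _ ⟨m1.1, m2.1⟩
    have him : dotProduct α (fun a => (v i a).im) = 0 :=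
      hdot d hd _ ⟨m1.2, m2.2⟩
    apply Complex.ext
    · simpa [dotProduct, Complex.mul_re, dotProduct] using hre
    · simpa [dotProduct, Complex.mul_im] using him
  -- conclude α = 0 using invertibility of the matrix of eigenvectors
  set W : Matrix (Fin n) (Fin n) ℂ := Matrix.of fun i a => v i a with hW
  have hWu : IsUnit W := Matrix.linearIndependent_rows_iff_isUnit.mp hli
  have hWd : IsUnit W.det := (Matrix.isUnit_iff_isUnit_det W).mp hWu
  have hWv : W.mulVec (fun a => (α a : ℂ)) = 0 := by
    funext i
    have := key i
    simpa [Matrix.mulVec, dotProduct, hW, mul_comm] using this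
  have hα : (fun a => (α a : ℂ)) = 0 := by
    have := congrArg (fun z => W⁻¹.mulVec z) hWv
    simpa [Matrix.mulVec_mulVec, Matrix.nonsing_inv_mul W hWd, Matrix.one_mulVec] using this
  funext a
  have := congrFun hα a
  rw [Pi.zero_apply] at this
  exact_mod_cast this

theorem rev
    {n p r N : ℕ} (A₁ A₂ : Matrix (Fin n) (Fin n) ℝ) (B₁ B₂ : Matrix (Fin n) (Fin p) ℝ)
    (Ω : Set (ℝ × ℝ)) (hΩ : Dense Ω)
    (P : Matrix (Fin n) (Fin r) (MvPolynomial (Fin 2) ℝ))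
    (hP : ∀ d ∈ Ω, LinearMap.range (evalPR P d.1 d.2).mulVecLin =
      VspR A₁ B₁ d.1 ⊓ VspR A₂ B₂ d.2)
    (C : ℕ → ℕ → Matrix (Fin n) (Fin r) ℝ)
    (hC : ∀ lam mu : ℝ, evalPR P lam mu =
      ∑ k ∈ Finset.range (N + 1), ∑ l ∈ Finset.range (N + 1), (lam ^ k * mu ^ l) • C k l)
    (hker : ∀ α : Fin n → ℝ, (∀ k l, k ≤ N → l ≤ N → Matrix.vecMul α (C k l) = 0) → α = 0) :
    FeedbackRectifiable A₁ A₂ B₁ B₂ ((fun x : ℝ × ℝ => ((x.1 : ℂ), (x.2 : ℂ))) '' Ω) := by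
  classical
  -- the set of all columns of all evaluations
  set t : Set (Fin n → ℝ) :=
    {w | ∃ lam : ℝ, ∃ mu : ℝ, ∃ j : Fin r, w = fun a => evalPR P lam mu a j} with ht
  -- Step 1: t spans ℝⁿ
  have hspan : Submodule.span ℝ t = ⊤ := by
    by_contra hne
    obtain ⟨f, hf0, hmap⟩ := Submodule.exists_dual_map_eq_bot_of_lt_top
      (p := Submodule.span ℝ t) (lt_top_iff_ne_top.mpr hne) inferInstance
    set α : Fin n → ℝ := fun i => f fun j => if i = j then 1 else 0 with hα
    have hfx : ∀ x, f x = ∑ i, x i * α i := by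
      intro x
      rw [LinearMap.pi_apply_eq_sum_univ f x]
      simp [hα, smul_eq_mul]
    have hcol : ∀ lam mu, Matrix.vecMul α (evalPR P lam mu) = 0 := by
      intro lam mu
      funext j
      have hw : (fun a => evalPR P lam mu a j) ∈ t := ⟨lam, mu, j, rfl⟩
      have hf : f (fun a => evalPR P lam mu a j) = 0 := by
        have hmem : f (fun a => evalPR P lam mu a j) ∈
            Submodule.map f (Submodule.span ℝ t) :=
          Submodule.mem_map_of_mem (Submodule.subset_span hw)
        rw [hmap] at hmem
        simpa using hmem
      rw [hfx] at hf
      simpa [Matrix.vecMul, dotProduct, mul_comm] using hf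
    have hC0 : ∀ k l, k ≤ N → l ≤ N → Matrix.vecMul α (C k l) = 0 := by
      intro k l hk hl
      funext j
      have key : ∀ x y : ℝ, ∑ k' ∈ Finset.range (N + 1), ∑ l' ∈ Finset.range (N + 1),
          (x ^ k' * y ^ l') * Matrix.vecMul α (C k' l') j = 0 := by
        intro x y
        have h1 := congrFun (hcol x y) j
        rw [hC x y, vecMul_finsetSum] at h1
        simp only [Finset.sum_apply, Pi.zero_apply] at h1
        rw [← h1]
        refine Finset.sum_congr rfl fun k' _ => ?_
        rw [vecMul_finsetSum]
        simp only [Finset.sum_apply]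
        refine Finset.sum_congr rfl fun l' _ => ?_
        rw [vecMul_smulM]
        simp [smul_eq_mul]
      exact poly2_zero (fun k' l' => Matrix.vecMul α (C k' l') j) key k l hk hl
    have : α = 0 := hker α hC0
    apply hf0
    apply LinearMap.ext
    intro x
    rw [hfx, this]
    simp
  -- Step 2: find n linearly independent columns
  obtain ⟨s, hst, hsp, hsli⟩ := exists_linearIndependent ℝ t
  have hsfin : s.Finite := hsli.setFinite
  haveI : Fintype s := hsfin.fintype
  have hcard : Fintype.card s = n := by
    have h1 : Module.finrank ℝ (Submodule.span ℝ s) = s.toFinset.card :=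
      finrank_span_set_eq_card hsli
    rw [hsp, hspan] at h1
    rw [Set.toFinset_card] at h1
    rw [← h1, finrank_top, Module.finrank_fin_fun]
  let e : Fin n ≃ s := (Fintype.equivFinOfCardEq hcard).symm
  set w : Fin n → (Fin n → ℝ) := fun i => ((e i : Fin n → ℝ)) with hwdef
  have hwli : LinearIndependent ℝ w := hsli.comp e e.injective
  have hwt : ∀ i, w i ∈ t := fun i => hst (e i).2
  choose lam0 mu0 j0 hw0 using hwt
  -- Step 3: perturb the evaluation points into Ω keeping invertibility
  have hgc : ∀ (a : Fin n) (j : Fin r), Continuous fun x : ℝ × ℝ => evalPR P x.1 x.2 a j := by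
    intro a j
    have hev : ∀ x : ℝ × ℝ, evalPR P x.1 x.2 a j = MvPolynomial.eval ![x.1, x.2] (P a j) := by
      intro x
      show MvPolynomial.aeval ![x.1, x.2] (P a j) = _
      rw [← MvPolynomial.coe_aeval_eq_eval]
      rfl
    simp only [hev]
    have hm : Continuous fun x : ℝ × ℝ => (![x.1, x.2] : Fin 2 → ℝ) := by
      apply continuous_pi
      intro i
      fin_cases i
      · simpa using continuous_fst
      · simpa using continuous_snd
    exact (MvPolynomial.continuous_eval (P a j)).comp hm
  set Φ : (Fin n → ℝ × ℝ) → Matrix (Fin n) (Fin n) ℝ :=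
    fun d => Matrix.of fun i a => evalPR P (d i).1 (d i).2 a (j0 i) with hΦ
  have hΦc : Continuous Φ := by
    apply continuous_matrix
    intro i a
    exact (hgc a (j0 i)).comp (continuous_apply i)
  have hdetc : Continuous fun d => (Φ d).det := hΦc.matrix_det
  set U : Set (Fin n → ℝ × ℝ) := {d | (Φ d).det ≠ 0} with hU
  have hUopen : IsOpen U := (isOpen_compl_singleton).preimage hdetc
  have hd0 : (fun i => (lam0 i, mu0 i)) ∈ U := by
    have hΦ0 : Φ (fun i => (lam0 i, mu0 i)) = Matrix.of fun i a => w i a := by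
      ext i a
      simp only [hΦ, Matrix.of_apply]
      rw [hw0 i]
    rw [Set.mem_setOf_eq, hΦ0]
    have hwu : IsUnit (Matrix.of fun i a => w i a) :=
      Matrix.linearIndependent_rows_iff_isUnit.mp hwli
    exact isUnit_iff_ne_zero.mp ((Matrix.isUnit_iff_isUnit_det _).mp hwu)
  have hΩn : Dense (Set.pi Set.univ fun _ : Fin n => Ω) :=
    dense_pi Set.univ fun i _ => hΩ
  obtain ⟨d, hdΩ', hdU⟩ := hΩn.exists_mem_open hUopen ⟨_, hd0⟩
  have hdΩ : ∀ i, d i ∈ Ω := fun i => hdΩ' i (Set.mem_univ i)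
  -- Step 4: the eigenvector candidates
  set v : Fin n → (Fin n → ℝ) := fun i a => evalPR P (d i).1 (d i).2 a (j0 i) with hv
  have hVdet : (Matrix.of fun i a => v i a).det ≠ 0 := hdU
  have hvmem : ∀ i, v i ∈ VspR A₁ B₁ (d i).1 ⊓ VspR A₂ B₂ (d i).2 := by
    intro i
    rw [← hP (d i) (hdΩ i)]
    refine ⟨Pi.single (j0 i) 1, ?_⟩
    rw [Matrix.mulVecLin_apply, Matrix.mulVec_single]
    funext a
    simp [hv]
  have hvm1 : ∀ i, ((d i).1 • (1 : Matrix (Fin n) (Fin n) ℝ) - A₁).mulVec (v i) ∈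
      LinearMap.range B₁.mulVecLin := fun i => (hvmem i).1
  have hvm2 : ∀ i, ((d i).2 • (1 : Matrix (Fin n) (Fin n) ℝ) - A₂).mulVec (v i) ∈
      LinearMap.range B₂.mulVecLin := fun i => (hvmem i).2
  choose u1 hu1 using hvm1
  choose u2 hu2 using hvm2
  -- the feedback matrices
  set V : Matrix (Fin n) (Fin n) ℝ := Matrix.of fun i a => v i a with hVdef
  have hVTdet : IsUnit Vᵀ.det := by
    rw [Matrix.det_transpose]
    exact isUnit_iff_ne_zero.mpr hVdet
  have hvcol : ∀ i, Vᵀ.mulVec (Pi.single i 1) = v i := by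
    intro i
    rw [Matrix.mulVec_single_one]
    rfl
  have hFmul : ∀ (q : ℕ) (U₁ : Matrix (Fin q) (Fin n) ℝ) (i : Fin n),
      (U₁ * Vᵀ⁻¹).mulVec (v i) = U₁ᵀ i := by
    intro q U₁ i
    rw [← hvcol i, Matrix.mulVec_mulVec, Matrix.mul_assoc, Matrix.nonsing_inv_mul Vᵀ hVTdet,
      Matrix.mul_one, Matrix.mulVec_single_one]
    rfl
  set U₁ : Matrix (Fin p) (Fin n) ℝ := Matrix.of fun q i => u1 i q with hU₁
  set U₂ : Matrix (Fin p) (Fin n) ℝ := Matrix.of fun q i => u2 i q with hU₂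
  set F₁ : Matrix (Fin p) (Fin n) ℝ := U₁ * Vᵀ⁻¹ with hF₁
  set F₂ : Matrix (Fin p) (Fin n) ℝ := U₂ * Vᵀ⁻¹ with hF₂
  have hF₁v : ∀ i, F₁.mulVec (v i) = u1 i := by
    intro i; rw [hF₁, hFmul]; funext b; simp [hU₁]
  have hF₂v : ∀ i, F₂.mulVec (v i) = u2 i := by
    intro i; rw [hF₂, hFmul]; funext b; simp [hU₂]
  -- real eigen equations
  have heig1 : ∀ i, (A₁ + B₁ * F₁).mulVec (v i) = (d i).1 • v i := by
    intro i
    rw [Matrix.add_mulVec, ← Matrix.mulVec_mulVec, hF₁v i]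
    have := hu1 i
    rw [Matrix.mulVecLin_apply] at this
    rw [this, Matrix.sub_mulVec, Matrix.smul_mulVec, Matrix.one_mulVec]
    abel
  have heig2 : ∀ i, (A₂ + B₂ * F₂).mulVec (v i) = (d i).2 • v i := by
    intro i
    rw [Matrix.add_mulVec, ← Matrix.mulVec_mulVec, hF₂v i]
    have := hu2 i
    rw [Matrix.mulVecLin_apply] at this
    rw [this, Matrix.sub_mulVec, Matrix.smul_mulVec, Matrix.one_mulVec]
    abel
  -- complexify
  refine ⟨F₁, F₂, fun i => (((d i).1 : ℂ), ((d i).2 : ℂ)), fun i a => ((v i a : ℝ) : ℂ),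
    fun i => ⟨d i, hdΩ i, rfl⟩, ?_, ?_, ?_⟩
  · -- linear independence over ℂ
    have hmap : (Matrix.of fun i a => ((v i a : ℝ) : ℂ)) = V.map Complex.ofRealHom := by
      ext i a
      simp [hVdef, Matrix.map_apply]
    have hdetC : (Matrix.of fun i a => ((v i a : ℝ) : ℂ)).det ≠ 0 := by
      rw [hmap, show V.map ⇑Complex.ofRealHom = Complex.ofRealHom.mapMatrix V from rfl,
        ← RingHom.map_det]
      intro h0
      apply hVdet
      rw [Complex.ofRealHom_eq_coe] at h0
      exact_mod_cast h0
    have : IsUnit (Matrix.of fun i a => ((v i a : ℝ) : ℂ)) :=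
      (Matrix.isUnit_iff_isUnit_det _).mpr (isUnit_iff_ne_zero.mpr hdetC)
    exact Matrix.linearIndependent_rows_iff_isUnit.mpr this
  · intro i
    rw [mapC_mulVec, heig1 i]
    funext a
    simp [Complex.real_smul]
  · intro i
    rw [mapC_mulVec, heig2 i]
    funext a
    simp [Complex.real_smul]


/-- Given a dense set `Ω_ℝ ⊆ ℝ × ℝ` and a polynomial matrix `P` whose columns span
`V^ℝ_{A₁,B₁}(λ) ∩ V^ℝ_{A₂,B₂}(μ)` for `(λ,μ) ∈ Ω_ℝ`, with coefficient matrices `C_{kl}`,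
the pairs are feedback rectifiable over `Ω_ℝ` iff no nonzero real `α` annihilates all the
coefficient matrices. -/
theorem feedback_rectifiable_real_iff_coeff_kernel
    {n p r N : ℕ} (A₁ A₂ : Matrix (Fin n) (Fin n) ℝ) (B₁ B₂ : Matrix (Fin n) (Fin p) ℝ)
    (Ω : Set (ℝ × ℝ)) (hΩ : Dense Ω)
    (P : Matrix (Fin n) (Fin r) (MvPolynomial (Fin 2) ℝ))
    (hP : ∀ d ∈ Ω, LinearMap.range (evalPR P d.1 d.2).mulVecLin =
      VspR A₁ B₁ d.1 ⊓ VspR A₂ B₂ d.2)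
    (C : ℕ → ℕ → Matrix (Fin n) (Fin r) ℝ)
    (hC : ∀ lam mu : ℝ, evalPR P lam mu =
      ∑ k ∈ Finset.range (N + 1), ∑ l ∈ Finset.range (N + 1), (lam ^ k * mu ^ l) • C k l) :
    FeedbackRectifiable A₁ A₂ B₁ B₂ ((fun x : ℝ × ℝ => ((x.1 : ℂ), (x.2 : ℂ))) '' Ω) ↔
    (∀ α : Fin n → ℝ, (∀ k l, k ≤ N → l ≤ N → Matrix.vecMul α (C k l) = 0) → α = 0) :=
  ⟨fun h => fwd A₁ A₂ B₁ B₂ Ω hΩ P hP C hC h, fun h => rev A₁ A₂ B₁ B₂ Ω hΩ P hP C hC h⟩
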